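/- Let A = {a,b,c} be a three-letter alphabet and m ≥ 2. The two-sided infinite word of period 3(m-1) given by repeating a^{m-1} c^{m-1} b^{m-1} avoids the set {a⋄^{m-2}a, b⋄^{m-2}b, c⋄^{m-2}c, a⋄^{m-2}b, c⋄^{m-2}a, b⋄^{m-2}c}, where ⋄ denotes a hole. Hence this set is avoidable. -/

import Mathlib

/-- The three-letter alphabet. -/
inductive ABC | a | b | c
deriving DecidableEq
open ABC

/-- A partial word of length `m` over alphabet `A`. -/
abbrev PW (m : ℕ) (A : Type) := Fin m → Option A

/-- A two-sided infinite word `w` meets a partial word `u`. -/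
def Meets {m : ℕ} {A : Type} (w : ℤ → A) (u : PW m A) : Prop :=
  ∃ i : ℤ, ∀ j : Fin m, ∀ x : A, u j = some x → w (i + (j : ℕ)) = x

/-- A set of partial words is unavoidable over `A`. -/
def Unavoidable {m : ℕ} {A : Type} (X : Set (PW m A)) : Prop :=
  ∀ w : ℤ → A, ∃ u ∈ X, Meets w u

/-- A set of partial words is avoidable over `A`. -/
def Avoidable {m : ℕ} {A : Type} (X : Set (PW m A)) : Prop :=
  ∃ w : ℤ → A, ∀ u ∈ X, ¬ Meets w u

/-- The partial word `x ⋄^(m-2) y` of length `m`: first letter `x`, last letter `y`,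
holes in between. -/
def oneHole {A : Type} (m : ℕ) (x y : A) : PW m A :=
  fun j => if (j : ℕ) = 0 then some x else if (j : ℕ) = m - 1 then some y else none

/-- The partial word `x ⋄^(p-1) d ⋄^(m-p-2) y` of length `m`: first letter `x`,
letter `d` at position `p`, last letter `y`, holes elsewhere. -/
def twoDef {A : Type} (m : ℕ) (x d y : A) (p : ℕ) : PW m A :=
  fun j => if (j : ℕ) = 0 then some x else if (j : ℕ) = p then some d
    else if (j : ℕ) = m - 1 then some y else none

/-- The two-sided infinite word of period `P` repeating the block `f` (given on `[0, P)`). -/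
def periodic {A : Type} (P : ℕ) (f : ℕ → A) : ℤ → A :=
  fun i => f ((i % (P : ℤ)).toNat)


def nxt : ABC → ABC
  | ABC.a => ABC.c
  | ABC.c => ABC.b
  | ABC.b => ABC.a

lemma step_lemma (m : ℕ) (hm : 2 ≤ m) (i : ℤ) :
    periodic (3 * (m - 1))
      (fun n => if n < m - 1 then a else if n < 2 * (m - 1) then c else b)
      (i + ((m - 1 : ℕ) : ℤ)) =
    nxt (periodic (3 * (m - 1))
      (fun n => if n < m - 1 then a else if n < 2 * (m - 1) then c else b) i) := by
  set k := m - 1 with hk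
  have hk1 : 1 ≤ k := by omega
  have hP : (0:ℤ) < ((3 * k : ℕ) : ℤ) := by exact_mod_cast Nat.pos_of_ne_zero (by omega)
  have hnn : 0 ≤ i % ((3 * k : ℕ) : ℤ) := Int.emod_nonneg i (by omega)
  set r : ℕ := (i % ((3 * k : ℕ) : ℤ)).toNat with hr
  have hri : (r : ℤ) = i % ((3 * k : ℕ) : ℤ) := Int.toNat_of_nonneg hnn
  have hrlt : r < 3 * k := by
    have := Int.emod_lt_of_pos i hP
    omega
  have hdecomp : i = (r : ℤ) + ((3 * k : ℕ) : ℤ) * (i / ((3 * k : ℕ) : ℤ)) := by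
    rw [hri]; rw [Int.emod_def]; ring
  have h2 : (i + (k : ℤ)) % ((3 * k : ℕ) : ℤ) = (((r + k : ℕ) : ℤ)) % ((3 * k : ℕ) : ℤ) := by
    conv_lhs => rw [hdecomp]
    rw [show (r : ℤ) + ((3 * k : ℕ) : ℤ) * (i / ((3 * k : ℕ) : ℤ)) + (k : ℤ)
        = ((r + k : ℕ) : ℤ) + ((3 * k : ℕ) : ℤ) * (i / ((3 * k : ℕ) : ℤ)) by push_cast; ring]
    exact Int.add_mul_emod_self_left ..
  have h3 : ((((r + k : ℕ) : ℤ)) % ((3 * k : ℕ) : ℤ)).toNat = (r + k) % (3 * k) := by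
    rw [← Int.natCast_emod]; exact Int.toNat_natCast _
  unfold periodic
  rw [h2, h3, ← hr]
  simp only []
  rcases Nat.lt_or_ge r k with h | h
  · have hmod : (r + k) % (3 * k) = r + k := Nat.mod_eq_of_lt (by omega)
    rw [hmod, if_pos h, if_neg (by omega : ¬ r + k < k), if_pos (by omega : r + k < 2 * k)]
    rfl
  · rcases Nat.lt_or_ge r (2 * k) with h' | h'
    · have hmod : (r + k) % (3 * k) = r + k := Nat.mod_eq_of_lt (by omega)
      rw [hmod, if_neg (by omega : ¬ r + k < k), if_neg (by omega : ¬ r + k < 2 * k),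
        if_neg (by omega : ¬ r < k), if_pos h']
      rfl
    · have hmod : (r + k) % (3 * k) = r - 2 * k := by
        rw [Nat.mod_eq_sub_mod (by omega), Nat.mod_eq_of_lt (by omega)]
        omega
      rw [hmod, if_pos (by omega : r - 2 * k < k), if_neg (by omega : ¬ r < k),
        if_neg (by omega : ¬ r < 2 * k)]
      rfl

lemma noMeet (m : ℕ) (hm : 2 ≤ m) (x y : ABC) (hxy : nxt x ≠ y) :
    ¬ Meets (periodic (3 * (m - 1))
      (fun n => if n < m - 1 then a else if n < 2 * (m - 1) then c else b))
      (oneHole m x y) := by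
  rintro ⟨i, h⟩
  have h0 := h ⟨0, by omega⟩ x (by simp [oneHole])
  have h1 := h ⟨m - 1, by omega⟩ y (by simp only [oneHole, Fin.val_mk]; rw [if_neg (by omega)]; simp)
  simp only [Fin.val_mk] at h0 h1
  rw [Nat.cast_zero, add_zero] at h0
  have := step_lemma m hm i
  rw [h1, h0] at this
  exact hxy this.symm

/-- The periodic word repeating a^(m-1) c^(m-1) b^(m-1) avoids
{a⋄^(m-2)a, b⋄^(m-2)b, c⋄^(m-2)c, a⋄^(m-2)b, c⋄^(m-2)a, b⋄^(m-2)c};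
hence this set is avoidable. -/
theorem stmt_1 (m : ℕ) (hm : 2 ≤ m) :
    (∀ u ∈ ({oneHole m a a, oneHole m b b, oneHole m c c,
              oneHole m a b, oneHole m c a, oneHole m b c} : Set (PW m ABC)),
      ¬ Meets (periodic (3 * (m - 1))
        (fun n => if n < m - 1 then a else if n < 2 * (m - 1) then c else b)) u) ∧
    Avoidable ({oneHole m a a, oneHole m b b, oneHole m c c,
                oneHole m a b, oneHole m c a, oneHole m b c} : Set (PW m ABC)) := by
  constructor
  · intro u hu
    rcases hu with h | h | h | h | h | h <;> subst h
    · exact noMeet m hm a a (by simp [nxt])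
    · exact noMeet m hm b b (by simp [nxt])
    · exact noMeet m hm c c (by simp [nxt])
    · exact noMeet m hm a b (by simp [nxt])
    · exact noMeet m hm c a (by simp [nxt])
    · exact noMeet m hm b c (by simp [nxt])
  · exact ⟨_, fun u hu => by
      rcases hu with h | h | h | h | h | h <;> subst h
      · exact noMeet m hm a a (by simp [nxt])
      · exact noMeet m hm b b (by simp [nxt])
      · exact noMeet m hm c c (by simp [nxt])
      · exact noMeet m hm a b (by simp [nxt])
      · exact noMeet m hm c a (by simp [nxt])
      · exact noMeet m hm b c (by simp [nxt])⟩
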